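/- Let r, t be sequences of nonzero reals and s a sequence with s₀ ≠ 0. The map T : ℓ∞(r,s,t;Δ) → ℓ∞ defined by (Tx)_n = (1/r_n) ∑_{k=0}^{n} s_{n-k} t_k (x_k − x_{k−1}) is a linear isometric isomorphism onto ℓ∞ (the space of bounded real sequences with the sup norm). -/

import Mathlib

/-- The transform `T = A(r,s,t)·Δ`. -/
noncomputable def Tm (r s t : ℕ → ℝ) (x : ℕ → ℝ) (n : ℕ) : ℝ :=
  (1 / r n) * ∑ k ∈ Finset.range (n + 1),
    s (n - k) * t k * (x k - if k = 0 then 0 else x (k - 1))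

/-- The backward difference. -/
noncomputable def dl (x : ℕ → ℝ) (k : ℕ) : ℝ :=
  x k - if k = 0 then 0 else x (k - 1)

lemma Tm_eq (r s t x : ℕ → ℝ) (n : ℕ) :
    Tm r s t x n = (1 / r n) * ∑ k ∈ Finset.range (n + 1),
      s (n - k) * t k * dl x k := rfl

lemma dl_add (x y : ℕ → ℝ) (k : ℕ) : dl (x + y) k = dl x k + dl y k := by
  unfold dl; by_cases h : k = 0 <;> simp [h] <;> ring

lemma dl_smul (c : ℝ) (x : ℕ → ℝ) (k : ℕ) : dl (c • x) k = c * dl x k := by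
  unfold dl; by_cases h : k = 0 <;> simp [h] <;> ring

/-- If backward differences agree, the sequences agree. -/
lemma eq_of_dl_eq (x y : ℕ → ℝ) (h : ∀ n, dl x n = dl y n) : x = y := by
  funext n
  induction n with
  | zero =>
    have := h 0
    simpa [dl] using this
  | succ n ih =>
    have := h (n + 1)
    simp only [dl, Nat.succ_ne_zero, if_false, Nat.add_sub_cancel] at this
    linarith

/-- Recovering differences from `Tm`. -/
lemma dl_eq_of_Tm_eq (r s t : ℕ → ℝ) (hr : ∀ n, r n ≠ 0) (ht : ∀ n, t n ≠ 0)
    (hs : s 0 ≠ 0) (x y : ℕ → ℝ) (h : Tm r s t x = Tm r s t y) :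
    ∀ n, dl x n = dl y n := by
  intro n
  induction n using Nat.strong_induction_on with
  | _ n ih =>
    have hS : ∑ k ∈ Finset.range (n + 1), s (n - k) * t k * dl x k
        = ∑ k ∈ Finset.range (n + 1), s (n - k) * t k * dl y k := by
      have h1 := congrFun h n
      rw [Tm_eq, Tm_eq] at h1
      exact mul_left_cancel₀ (one_div_ne_zero (hr n)) h1
    rw [Finset.sum_range_succ, Finset.sum_range_succ] at hS
    have h2 : ∑ k ∈ Finset.range n, s (n - k) * t k * dl x k
        = ∑ k ∈ Finset.range n, s (n - k) * t k * dl y k :=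
      Finset.sum_congr rfl fun k hk => by rw [ih k (Finset.mem_range.mp hk)]
    rw [h2, Nat.sub_self] at hS
    have h3 : s 0 * t n * dl x n = s 0 * t n * dl y n := by linarith
    exact mul_left_cancel₀ (mul_ne_zero hs (ht n)) h3

/-- The triangular-system solution for the difference sequence. -/
noncomputable def dseq (r s t y : ℕ → ℝ) : ℕ → ℝ
  | n =>
    (r n * y n - ∑ k ∈ (Finset.range n).attach,
      s (n - k.1) * t k.1 * dseq r s t y k.1) / (s 0 * t n)
  decreasing_by exact Finset.mem_range.mp k.2

lemma dseq_spec (r s t y : ℕ → ℝ) (n : ℕ) :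
    dseq r s t y n = (r n * y n - ∑ k ∈ Finset.range n,
      s (n - k) * t k * dseq r s t y k) / (s 0 * t n) := by
  rw [dseq]
  congr 1
  rw [← Finset.sum_attach (Finset.range n) (fun k => s (n - k) * t k * dseq r s t y k)]

/-- Surjectivity of `Tm`. -/
lemma Tm_surj (r s t : ℕ → ℝ) (hr : ∀ n, r n ≠ 0) (ht : ∀ n, t n ≠ 0)
    (hs : s 0 ≠ 0) (y : ℕ → ℝ) : ∃ x, Tm r s t x = y := by
  set d := dseq r s t y with hd
  refine ⟨fun n => ∑ k ∈ Finset.range (n + 1), d k, ?_⟩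
  have hdl : ∀ k, dl (fun n => ∑ k ∈ Finset.range (n + 1), d k) k = d k := by
    intro k
    cases k with
    | zero => simp [dl]
    | succ m =>
      simp only [dl, Nat.succ_ne_zero, if_false, Nat.add_sub_cancel]
      rw [Finset.sum_range_succ]; ring
  funext n
  rw [Tm_eq]
  have hsum : ∀ k, s (n - k) * t k * dl (fun n => ∑ k ∈ Finset.range (n + 1), d k) k
      = s (n - k) * t k * d k := fun k => by rw [hdl k]
  rw [Finset.sum_congr rfl fun k _ => hsum k, Finset.sum_range_succ, Nat.sub_self]
  have hst : s 0 * t n ≠ 0 := mul_ne_zero hs (ht n)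
  have hdn : s 0 * t n * d n = r n * y n - ∑ k ∈ Finset.range n, s (n - k) * t k * d k := by
    rw [hd, dseq_spec]
    field_simp
    exact mul_div_cancel_left₀ _ (ht n)
  have : ∑ k ∈ Finset.range n, s (n - k) * t k * d k + s 0 * t n * d n = r n * y n := by
    rw [hdn]; ring
  rw [this]
  field_simp
  exact mul_div_cancel_left₀ _ (hr n)

/-- The map `T = A(r,s,t)·Δ` is a linear isometric isomorphism from
`ℓ∞(r,s,t;Δ)` onto `ℓ∞`. -/
theorem stmt_4 (r s t : ℕ → ℝ) (hr : ∀ n, r n ≠ 0) (ht : ∀ n, t n ≠ 0)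
    (hs : s 0 ≠ 0) :
    let T : (ℕ → ℝ) → ℕ → ℝ := fun x n =>
      (1 / r n) * ∑ k ∈ Finset.range (n + 1),
        s (n - k) * t k * (x k - if k = 0 then 0 else x (k - 1))
    let X : Set (ℕ → ℝ) := {x | BddAbove (Set.range fun n => |T x n|)}
    let L : Set (ℕ → ℝ) := {y | BddAbove (Set.range fun n => |y n|)}
    let N : (ℕ → ℝ) → ℝ := fun x => ⨆ n, |T x n|
    (∀ x y : ℕ → ℝ, T (x + y) = T x + T y) ∧
    (∀ (c : ℝ) (x : ℕ → ℝ), T (c • x) = c • T x) ∧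
    (∀ x ∈ X, T x ∈ L) ∧
    (∀ x y : ℕ → ℝ, T x = T y → x = y) ∧
    (∀ y ∈ L, ∃ x ∈ X, T x = y) ∧
    (∀ x ∈ X, N x = ⨆ n, |T x n|) := by
  intro T X L N
  have hT : T = Tm r s t := rfl
  refine ⟨?_, ?_, ?_, ?_, ?_, fun x _ => rfl⟩
  · intro x y
    funext n
    rw [hT]
    simp only [Pi.add_apply, Tm_eq]
    rw [← mul_add, ← Finset.sum_add_distrib]
    congr 1
    exact Finset.sum_congr rfl fun k _ => by rw [dl_add]; ring
  · intro c x
    funext n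
    rw [hT]
    simp only [Pi.smul_apply, smul_eq_mul, Tm_eq]
    have h1 : ∀ k ∈ Finset.range (n + 1),
        s (n - k) * t k * dl (c • x) k = c * (s (n - k) * t k * dl x k) :=
      fun k _ => by rw [dl_smul]; ring
    rw [Finset.sum_congr rfl h1, ← Finset.mul_sum]
    ring
  · exact fun x hx => hx
  · intro x y h
    rw [hT] at h
    exact eq_of_dl_eq x y (dl_eq_of_Tm_eq r s t hr ht hs x y h)
  · intro y hy
    obtain ⟨x, hx⟩ := Tm_surj r s t hr ht hs y
    refine ⟨x, ?_, by rw [hT, hx]⟩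
    show BddAbove (Set.range fun n => |T x n|)
    rw [hT, hx]
    exact hy
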